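/- Let Q be a quadratic form on a finite-dimensional real vector space Λ with null space N of dimension 1 (i.e., Q is degenerate with one-dimensional radical). Then there exists a real vector space Λ̄ ⊇ Λ with dim Λ̄ = dim Λ + 1 and a non-degenerate quadratic form Q̄ on Λ̄ extending Q, such that every ℝ-linear map Z : Λ → ℂ whose kernel is negative definite for Q extends to an ℝ-linear map Z̄ : Λ̄ → ℂ whose kernel is negative definite for Q̄. -/

import Mathlib

/-- On a finite-dimensional space, if `Q` is negative definite on a submodule `K`, then
`Q + f` is bounded above on `K` for any linear functional `f`. -/
lemma aux_bdd {Λ : Type*} [AddCommGroup Λ] [Module ℝ Λ] [FiniteDimensional ℝ Λ]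
    (Q : QuadraticForm ℝ Λ) (K : Submodule ℝ Λ) (f : Λ →ₗ[ℝ] ℝ)
    (hneg : ∀ k ∈ K, k ≠ 0 → Q k < 0) :
    ∃ M : ℝ, ∀ k ∈ K, Q k + f k ≤ M := by
  classical
  set B : LinearMap.BilinForm ℝ K :=
    -((2⁻¹ : ℝ) • (Q.polarBilin.compl₁₂ K.subtype K.subtype)) with hB
  have hBapply : ∀ x y : K, B x y = -(2⁻¹ * QuadraticMap.polar Q (x : Λ) (y : Λ)) := by
    intro x y; simp [hB, QuadraticMap.polarBilin]
  have hBself : ∀ x : K, B x x = -Q (x : Λ) := by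
    intro x
    rw [hBapply, QuadraticMap.polar_self, nsmul_eq_mul]
    push_cast
    ring
  have hBsymm : ∀ x y : K, B x y = B y x := by
    intro x y; rw [hBapply, hBapply, QuadraticMap.polar_comm]
  have hQnonpos : ∀ x : K, Q (x : Λ) ≤ 0 := by
    intro x
    by_cases hx : (x : Λ) = 0
    · simp [hx]
    · exact (hneg _ x.2 hx).le
  have hpos : ∀ x : K, 0 ≤ B x x := by
    intro x; rw [hBself]; linarith [hQnonpos x]
  have hnd : LinearMap.BilinForm.Nondegenerate B := by
    suffices hsepB : ∀ x : K, (∀ y : K, B x y = 0) → x = 0 from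
      ⟨hsepB, fun y hy => hsepB y (fun x => by rw [hBsymm]; exact hy x)⟩
    intro x hx
    by_contra hx0
    have h1 : B x x = 0 := hx x
    have h2 : Q (x : Λ) < 0 := hneg _ x.2 (by simpa using hx0)
    rw [hBself] at h1
    linarith
  set w : K := (B.toDual hnd).symm (f.comp K.subtype) with hw
  have hfw : ∀ k : K, B w k = f (k : Λ) := fun k =>
    LinearMap.BilinForm.apply_toDual_symm_apply (B := B) (hB := hnd) (f.comp K.subtype) k
  refine ⟨B w w / 4, fun k hk => ?_⟩
  set k' : K := ⟨k, hk⟩ with hk'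
  have hexp : 0 ≤ B (k' - (2⁻¹ : ℝ) • w) (k' - (2⁻¹ : ℝ) • w) := hpos _
  have hBww : B k' k' = -Q k := hBself k'
  have hBwk : B w k' = f k := hfw k'
  have hsymm := hBsymm k' w
  simp only [map_sub, map_smul, LinearMap.sub_apply, LinearMap.smul_apply,
    smul_eq_mul] at hexp
  nlinarith [hexp, hBww, hBwk, hsymm]

/-- Let `Q` be a quadratic form on a finite-dimensional real vector space
`Λ` whose radical (the kernel of the associated bilinear form) is one-dimensional.  Then
there is a real vector space `Λ̄ ⊇ Λ` of dimension `dim Λ + 1` (realized as `Λ × ℝ` with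
`Λ` embedded as `v ↦ (v, 0)`) and a non-degenerate quadratic form `Q̄` on `Λ̄` extending
`Q`, such that every `ℝ`-linear `Z : Λ → ℂ` whose kernel is negative definite for `Q`
extends to an `ℝ`-linear `Z̄ : Λ̄ → ℂ` whose kernel is negative definite for `Q̄`. -/
theorem stmt6 {Λ : Type*} [AddCommGroup Λ] [Module ℝ Λ] [FiniteDimensional ℝ Λ]
    (Q : QuadraticForm ℝ Λ)
    (hrad : Module.finrank ℝ (LinearMap.ker Q.polarBilin) = 1) :
    ∃ Qbar : QuadraticForm ℝ (Λ × ℝ),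
      (∀ v : Λ, Qbar (v, 0) = Q v) ∧
      Qbar.polarBilin.Nondegenerate ∧
      ∀ Z : Λ →ₗ[ℝ] ℂ, (∀ v ∈ LinearMap.ker Z, v ≠ 0 → Q v < 0) →
        ∃ Zbar : (Λ × ℝ) →ₗ[ℝ] ℂ, (∀ v : Λ, Zbar (v, 0) = Z v) ∧
          ∀ x ∈ LinearMap.ker Zbar, x ≠ 0 → Qbar x < 0 := by
  classical
  -- extract a generator `n` of the radical
  obtain ⟨n₀, hn₀ne, hn₀span⟩ := (finrank_eq_one_iff' ).mp hrad
  set n : Λ := (n₀ : Λ) with hn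
  have hnne : n ≠ 0 := fun h => hn₀ne (Subtype.ext h)
  have hnrad : ∀ w : Λ, QuadraticMap.polar Q n w = 0 := by
    intro w
    have h0 : Q.polarBilin n = 0 := LinearMap.mem_ker.mp n₀.2
    have h1 := LinearMap.congr_fun h0 w
    rw [QuadraticMap.polarBilin_apply_apply] at h1
    simpa using h1
  have hQn : Q n = 0 := by
    have := hnrad n
    rw [QuadraticMap.polar_self, two_smul] at this
    linarith
  have hspan : ∀ x ∈ LinearMap.ker Q.polarBilin, ∃ c : ℝ, c • n = x := by
    intro x hx
    obtain ⟨c, hc⟩ := hn₀span ⟨x, hx⟩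
    exact ⟨c, by simpa [hn] using congrArg (Subtype.val) hc⟩
  -- a linear functional `f` with `f n = 1`
  obtain ⟨f, hf⟩ := (LinearMap.toSpanSingleton ℝ Λ n).exists_leftInverse_of_injective
    (LinearMap.ker_toSpanSingleton ℝ hnne)
  have hfn : f n = 1 := by
    have := LinearMap.congr_fun hf 1
    simpa [LinearMap.toSpanSingleton] using this
  -- the extended quadratic form
  set Qbar : QuadraticForm ℝ (Λ × ℝ) :=
    Q.comp (LinearMap.fst ℝ Λ ℝ) +
      QuadraticMap.linMulLin (LinearMap.snd ℝ Λ ℝ) (f ∘ₗ LinearMap.fst ℝ Λ ℝ) with hQbar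
  have hQbarApp : ∀ p : Λ × ℝ, Qbar p = Q p.1 + p.2 * f p.1 := by
    intro p
    simp [hQbar, QuadraticMap.linMulLin_apply]
  have hpolar : ∀ x y : Λ × ℝ, QuadraticMap.polar Qbar x y =
      QuadraticMap.polar Q x.1 y.1 + x.2 * f y.1 + y.2 * f x.1 := by
    intro x y
    simp only [QuadraticMap.polar, hQbarApp, Prod.fst_add, Prod.snd_add, map_add]
    ring
  refine ⟨Qbar, ?_, ?_, ?_⟩
  · intro v; simp [hQbarApp]
  · -- nondegeneracy
    have hsep : ∀ x : Λ × ℝ, (∀ y : Λ × ℝ, QuadraticMap.polar Qbar x y = 0) → x = 0 := by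
      intro x hx'
      have ht : x.2 = 0 := by
        have := hx' (n, 0)
        rw [hpolar] at this
        simp only [QuadraticMap.polar_comm Q x.1 n, hnrad, hfn] at this
        simpa using this
      have hfx : f x.1 = 0 := by
        have := hx' (0, 1)
        rw [hpolar] at this
        simpa [ht] using this
      have hx1rad : x.1 ∈ LinearMap.ker Q.polarBilin := by
        rw [LinearMap.mem_ker]
        ext w
        have := hx' (w, 0)
        rw [hpolar] at this
        rw [QuadraticMap.polarBilin_apply_apply]
        simpa [ht] using this
      obtain ⟨c, hc⟩ := hspan x.1 hx1rad
      have hc0 : c = 0 := by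
        have : f x.1 = c := by rw [← hc]; simp [hfn]
        rw [hfx] at this; exact this.symm
      have hx1 : x.1 = 0 := by rw [← hc, hc0, zero_smul]
      exact Prod.ext hx1 ht
    refine ⟨fun x hx => hsep x (fun y => ?_), fun y hy => hsep y (fun x => ?_)⟩
    · have := hx y
      rwa [QuadraticMap.polarBilin_apply_apply] at this
    · have := hy x
      rw [QuadraticMap.polarBilin_apply_apply] at this
      rwa [QuadraticMap.polar_comm]
  · -- extending central charges
    intro Z hZ
    obtain ⟨M, hM⟩ := aux_bdd Q (LinearMap.ker Z) f hZ
    set s : ℝ := -(M + 1) with hs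
    set α : ℂ := (-s : ℝ) • Z n with hα
    set Zbar : (Λ × ℝ) →ₗ[ℝ] ℂ :=
      Z.comp (LinearMap.fst ℝ Λ ℝ) + (LinearMap.snd ℝ Λ ℝ).smulRight α with hZbar
    have hZbarApp : ∀ p : Λ × ℝ, Zbar p = Z p.1 + p.2 • α := by
      intro p; simp [hZbar]
    refine ⟨Zbar, fun v => by simp [hZbarApp], ?_⟩
    intro x hx hxne
    have hker : Z x.1 + x.2 • α = 0 := by
      rw [LinearMap.mem_ker] at hx; rw [← hZbarApp]; exact hx
    by_cases ht : x.2 = 0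
    · have hx1ne : x.1 ≠ 0 := by
        intro h; exact hxne (Prod.ext h ht)
      have hx1ker : Z x.1 = 0 := by simpa [ht] using hker
      have := hZ x.1 (LinearMap.mem_ker.mpr hx1ker) hx1ne
      rw [hQbarApp]
      simpa [ht] using this
    · -- x.2 ≠ 0
      set t : ℝ := x.2 with htdef
      set u : Λ := t⁻¹ • x.1 with hu
      have hZu : Z u = s • Z n := by
        have h1 : Z x.1 = -(t • α) := by linear_combination hker
        have h2 : Z u = t⁻¹ • Z x.1 := by rw [hu, map_smul]
        rw [h2, h1, hα, smul_neg, smul_smul, inv_mul_cancel₀ ht, one_smul,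
          neg_smul, neg_neg]
      set k : Λ := u - s • n with hk
      have hkker : k ∈ LinearMap.ker Z := by
        rw [LinearMap.mem_ker, hk, map_sub, hZu, map_smul, sub_self]
      have hQu1 : Qbar (u, 1) = Q k + f k + s := by
        rw [hQbarApp]
        have hu' : u = k + s • n := by rw [hk]; abel
        have hQdecomp : Q u = Q k := by
          rw [hu']
          have : Q (k + s • n) = Q k + QuadraticMap.polar Q k (s • n) + Q (s • n) := by
            rw [QuadraticMap.polar]; ring
          rw [this, QuadraticMap.polar_comm, QuadraticMap.polar_smul_left, hnrad,
            QuadraticMap.map_smul, hQn]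
          simp
        have hfdecomp : f u = f k + s := by
          rw [hu', map_add, map_smul, hfn, smul_eq_mul, mul_one]
        rw [hQdecomp, hfdecomp]; ring
      have hQu1neg : Qbar (u, 1) < 0 := by
        rw [hQu1, hs]
        have := hM k hkker
        linarith
      have hxu : x = t • (u, 1) := by
        have h1 : t • u = x.1 := by
          rw [hu, smul_smul, mul_inv_cancel₀ ht, one_smul]
        rw [Prod.smul_mk, h1, smul_eq_mul, mul_one]
      rw [hxu, QuadraticMap.map_smul, smul_eq_mul]
      exact mul_neg_of_pos_of_neg (mul_self_pos.mpr ht) hQu1neg
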